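/- arXiv:2411.14342 — 2 statements merged into one kernel-verified Lean document; each statement's English description precedes it below -/
import Mathlib

section
/- Let f : ℝ^d → ℝ be ρ-weakly convex and 0 < μ < 1/ρ, and let x*(z) denote the unique minimizer of x ↦ f(x) + (1/(2μ))‖x − z‖². Then the proximal map is (1 − μρ)^{-1}-Lipschitz: ‖x*(z) − x*(z')‖ ≤ (1 − μρ)^{-1} ‖z − z'‖ for all z, z'. -/
open RealInnerProductSpace

lemma combo_norm_sq {E : Type*} [NormedAddCommGroup E] [InnerProductSpace ℝ E]
    (u x z : E) (t : ℝ) :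
    ‖(t • x + (1-t) • u) - z‖^2
      = t*‖x-z‖^2 + (1-t)*‖u-z‖^2 - t*(1-t)*‖x-u‖^2 := by
  have h : (t • x + (1-t) • u) - z = t • (x - z) + (1-t) • (u - z) := by module
  have h2 : x - u = (x - z) - (u - z) := by abel
  rw [h, h2]
  set a := x - z
  set b := u - z
  rw [← real_inner_self_eq_norm_sq, ← real_inner_self_eq_norm_sq,
    ← real_inner_self_eq_norm_sq, ← real_inner_self_eq_norm_sq]
  simp only [inner_add_left, inner_add_right, inner_sub_left, inner_sub_right,
    real_inner_smul_left, real_inner_smul_right]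
  rw [real_inner_comm b a]
  ring

lemma four_point_inner {E : Type*} [NormedAddCommGroup E] [InnerProductSpace ℝ E]
    (u v z z' : E) :
    (‖v - z‖^2 - ‖v - z'‖^2) + (‖u - z'‖^2 - ‖u - z‖^2) = 2 * ⟪u - v, z - z'⟫ := by
  rw [← real_inner_self_eq_norm_sq, ← real_inner_self_eq_norm_sq,
    ← real_inner_self_eq_norm_sq, ← real_inner_self_eq_norm_sq]
  simp only [inner_sub_left, inner_sub_right]
  ring_nf
  rw [real_inner_comm v z, real_inner_comm v z', real_inner_comm u z', real_inner_comm u z]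
  ring

/-- The proximal map of a ρ-weakly convex function is (1−μρ)⁻¹-Lipschitz. -/
theorem prox_map_lipschitz {d : ℕ}
    (f : EuclideanSpace ℝ (Fin d) → ℝ)
    (ρ : ℝ) (hρ : 0 < ρ)
    (hwc : ConvexOn ℝ Set.univ (fun x => f x + (ρ / 2) * ‖x‖ ^ 2))
    (μ : ℝ) (hμ : 0 < μ) (hμρ : μ < 1 / ρ)
    (xstar : EuclideanSpace ℝ (Fin d) → EuclideanSpace ℝ (Fin d))
    (hxstar : ∀ z x, f (xstar z) + (1 / (2 * μ)) * ‖xstar z - z‖ ^ 2 ≤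
        f x + (1 / (2 * μ)) * ‖x - z‖ ^ 2) :
    ∀ z z', ‖xstar z - xstar z'‖ ≤ (1 - μ * ρ)⁻¹ * ‖z - z'‖ := by
  have hρμ : μ * ρ < 1 := by
    have := (lt_div_iff₀ hρ).mp hμρ
    linarith
  set c : ℝ := 1/μ - ρ with hc
  have hcpos : 0 < c := by
    rw [hc, sub_pos, lt_div_iff₀ hμ]
    linarith [mul_comm μ ρ, hρμ]
  have hμρ1 : μ * c = 1 - μ * ρ := by rw [hc]; field_simp
  -- strong convexity of the prox objective at its minimizer
  have key : ∀ z x, f (xstar z) + (1 / (2 * μ)) * ‖xstar z - z‖ ^ 2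
        + (c/2) * ‖x - xstar z‖^2 ≤
      f x + (1 / (2 * μ)) * ‖x - z‖ ^ 2 := by
    intro z x
    set u := xstar z with hu
    have step : ∀ t ∈ Set.Ioo (0:ℝ) 1,
        f u + (1 / (2 * μ)) * ‖u - z‖ ^ 2 + (c/2) * (1-t) * ‖x - u‖^2 ≤
        f x + (1 / (2 * μ)) * ‖x - z‖ ^ 2 := by
      intro t ht
      obtain ⟨ht0, ht1⟩ := ht
      have hcv := hwc.2 (Set.mem_univ x) (Set.mem_univ u) (le_of_lt ht0)
        (by linarith : (0:ℝ) ≤ 1 - t) (by ring)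
      simp only [smul_eq_mul] at hcv
      have hmin := hxstar z (t • x + (1-t) • u)
      rw [← hu] at hmin
      have hid1 := combo_norm_sq u x z t
      have hid0 := combo_norm_sq u x 0 t
      simp only [sub_zero] at hid0
      rw [hid1] at hmin
      rw [hid0] at hcv
      have hdiv : t * (f u + (1 / (2 * μ)) * ‖u - z‖ ^ 2 + (c/2) * (1-t) * ‖x - u‖^2)
          ≤ t * (f x + (1 / (2 * μ)) * ‖x - z‖ ^ 2) := by
        have hμ' : μ ≠ 0 := ne_of_gt hμ
        have hcomb : t * (f u + (1 / (2 * μ)) * ‖u - z‖ ^ 2 + (c/2) * (1-t) * ‖x - u‖^2)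
            - t * (f x + (1 / (2 * μ)) * ‖x - z‖ ^ 2)
            = (f u + 1 / (2 * μ) * ‖u - z‖ ^ 2
                - (f (t • x + (1 - t) • u) + 1 / (2 * μ) *
                  (t * ‖x - z‖ ^ 2 + (1 - t) * ‖u - z‖ ^ 2 - t * (1 - t) * ‖x - u‖ ^ 2)))
              + ((f (t • x + (1 - t) • u) + ρ / 2 *
                  (t * ‖x‖ ^ 2 + (1 - t) * ‖u‖ ^ 2 - t * (1 - t) * ‖x - u‖ ^ 2))
                - (t * (f x + ρ / 2 * ‖x‖ ^ 2) + (1 - t) * (f u + ρ / 2 * ‖u‖ ^ 2))) := by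
          rw [hc]; field_simp; ring
        linarith [hmin, hcv, hcomb.le, hcomb.ge]
      exact le_of_mul_le_mul_left hdiv ht0
    -- pass to the limit t → 0⁺
    have hlim : Filter.Tendsto
        (fun t : ℝ => f u + (1 / (2 * μ)) * ‖u - z‖ ^ 2 + (c/2) * (1-t) * ‖x - u‖^2)
        (nhdsWithin 0 (Set.Ioi 0))
        (nhds (f u + (1 / (2 * μ)) * ‖u - z‖ ^ 2 + (c/2) * ‖x - u‖^2)) := by
      have hco : Continuous
          (fun t : ℝ => f u + (1 / (2 * μ)) * ‖u - z‖ ^ 2 + (c/2) * (1-t) * ‖x - u‖^2) := by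
        continuity
      have h2 := (hco.tendsto 0).mono_left (nhdsWithin_le_nhds (s := Set.Ioi (0:ℝ)))
      simpa using h2
    refine le_of_tendsto hlim ?_
    filter_upwards [Ioo_mem_nhdsGT_of_mem (by norm_num : (0:ℝ) ∈ Set.Ico 0 1)] with t ht
    exact step t ht
  -- combine the two strong-convexity inequalities
  intro z z'
  set u := xstar z
  set v := xstar z'
  have h1 := key z v
  have h2 := key z' u
  have ediff := four_point_inner u v z z'
  have hnuv : ‖v - u‖ = ‖u - v‖ := by rw [← norm_neg]; congr 1; abel
  have hcs : ⟪u - v, z - z'⟫ ≤ ‖u - v‖ * ‖z - z'‖ := real_inner_le_norm _ _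
  have hmain : c * ‖u - v‖^2 ≤ (1/μ) * (‖u - v‖ * ‖z - z'‖) := by
    rw [hnuv] at h1
    have hμ2 : (0:ℝ) < 1/(2*μ) := by positivity
    have hE := congrArg (fun r => (1/(2*μ)) * r) ediff
    simp only [mul_add, mul_sub] at hE
    have hsum : c * ‖u - v‖^2 ≤ (1/(2*μ)) * (2 * ⟪u - v, z - z'⟫) := by
      linarith [h1, h2, hE.le, hE.ge]
    calc c * ‖u - v‖^2 ≤ (1/(2*μ)) * (2 * ⟪u - v, z - z'⟫) := hsum
      _ = (1/μ) * ⟪u - v, z - z'⟫ := by field_simp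
      _ ≤ (1/μ) * (‖u - v‖ * ‖z - z'‖) := by
          apply mul_le_mul_of_nonneg_left hcs
          positivity
  have hμc : 0 < 1 - μ * ρ := by linarith
  rcases eq_or_lt_of_le (norm_nonneg (u - v)) with h0 | h0
  · rw [← h0]; positivity
  · rw [inv_mul_eq_div, le_div_iff₀ hμc]
    have hstep : c * ‖u - v‖ ≤ (1/μ) * ‖z - z'‖ := by
      have h' : (c * ‖u - v‖) * ‖u - v‖ ≤ ((1/μ) * ‖z - z'‖) * ‖u - v‖ := by
        have e1 : (c * ‖u - v‖) * ‖u - v‖ = c * ‖u - v‖^2 := by ring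
        have e2 : ((1/μ) * ‖z - z'‖) * ‖u - v‖ = (1/μ) * (‖u - v‖ * ‖z - z'‖) := by ring
        rw [e1, e2]; exact hmain
      exact le_of_mul_le_mul_right h' h0
    calc ‖u - v‖ * (1 - μ * ρ) = μ * (c * ‖u - v‖) := by rw [← hμρ1]; ring
      _ ≤ μ * ((1/μ) * ‖z - z'‖) := by
          exact mul_le_mul_of_nonneg_left hstep (le_of_lt hμ)
      _ = ‖z - z'‖ := by field_simp
end

section
/- Let f₁, f₂ : ℝ^d → ℝ be ρ-weakly convex, 0 < μ < 1/ρ, and define f_μ(z) := f_{2,μ}(z) − f_{1,μ}(z) where f_{i,μ} is the Moreau envelope of f_i. Then ∇f_μ(z) = (x₁*(z) − x₂*(z))/μ, where x_i*(z) is the proximal point of f_i at z, and ∇f_μ is Lipschitz continuous with constant 2/(μ − μ²ρ). -/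
open RealInnerProductSpace

section Helpers

variable {E : Type*} [NormedAddCommGroup E] [InnerProductSpace ℝ E]

private lemma quad_combo (x y : E) (t : ℝ) :
    ‖(1 - t) • x + t • y‖ ^ 2 =
      (1 - t) * ‖x‖ ^ 2 + t * ‖y‖ ^ 2 - t * (1 - t) * ‖x - y‖ ^ 2 := by
  have h : ∀ v : E, ‖v‖ ^ 2 = ⟪v, v⟫ := fun v => (real_inner_self_eq_norm_sq v).symm
  rw [h, h, h, h]
  simp only [inner_add_left, inner_add_right, inner_sub_left, inner_sub_right,
    real_inner_smul_left, real_inner_smul_right, real_inner_comm x y]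
  ring

private lemma strong_min (f : E → ℝ) (ρ μ : ℝ) (hμ : 0 < μ)
    (hconv : ConvexOn ℝ Set.univ (fun x => f x + (ρ / 2) * ‖x‖ ^ 2))
    (z xs : E)
    (hmin : ∀ x, f xs + (1 / (2 * μ)) * ‖xs - z‖ ^ 2 ≤ f x + (1 / (2 * μ)) * ‖x - z‖ ^ 2)
    (y : E) :
    f xs + (1 / (2 * μ)) * ‖xs - z‖ ^ 2 + ((1 / μ - ρ) / 2) * ‖y - xs‖ ^ 2 ≤
      f y + (1 / (2 * μ)) * ‖y - z‖ ^ 2 := by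
  have key : ∀ t : ℝ, t ∈ Set.Ioo (0:ℝ) 1 →
      ((1 / μ - ρ) / 2) * (1 - t) * ‖y - xs‖ ^ 2 ≤
        (f y + (1 / (2 * μ)) * ‖y - z‖ ^ 2) - (f xs + (1 / (2 * μ)) * ‖xs - z‖ ^ 2) := by
    intro t ht
    obtain ⟨ht0, ht1⟩ := ht
    have hc := hconv.2 (Set.mem_univ xs) (Set.mem_univ y)
      (by linarith : (0:ℝ) ≤ 1 - t) ht0.le (by ring)
    simp only [smul_eq_mul] at hc
    rw [quad_combo] at hc
    have hm := hmin ((1 - t) • xs + t • y)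
    have hxtz : (1 - t) • xs + t • y - z = (1 - t) • (xs - z) + t • (y - z) := by
      module
    rw [hxtz, quad_combo] at hm
    have hsub : xs - z - (y - z) = xs - y := by abel
    rw [hsub] at hm
    have hns : ‖xs - y‖ = ‖y - xs‖ := norm_sub_rev _ _
    rw [hns] at hc hm
    have hmul : t * (((1 / μ - ρ) / 2) * (1 - t) * ‖y - xs‖ ^ 2) ≤
        t * ((f y + (1 / (2 * μ)) * ‖y - z‖ ^ 2) - (f xs + (1 / (2 * μ)) * ‖xs - z‖ ^ 2)) := by
      rw [show (1:ℝ)/(2*μ) = (1/μ)/2 from by ring] at hm ⊢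
      linarith [hc, hm]
    exact le_of_mul_le_mul_left hmul ht0
  have hlim : Filter.Tendsto (fun t : ℝ => ((1 / μ - ρ) / 2) * (1 - t) * ‖y - xs‖ ^ 2)
      (nhdsWithin 0 (Set.Ioi 0)) (nhds (((1 / μ - ρ) / 2) * ‖y - xs‖ ^ 2)) := by
    have : Filter.Tendsto (fun t : ℝ => ((1 / μ - ρ) / 2) * (1 - t) * ‖y - xs‖ ^ 2)
        (nhds 0) (nhds (((1 / μ - ρ) / 2) * (1 - 0) * ‖y - xs‖ ^ 2)) := by
      apply Continuous.tendsto
      continuity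
    simpa using this.mono_left nhdsWithin_le_nhds
  have hev : ∀ᶠ t in nhdsWithin (0:ℝ) (Set.Ioi 0),
      ((1 / μ - ρ) / 2) * (1 - t) * ‖y - xs‖ ^ 2 ≤
        (f y + (1 / (2 * μ)) * ‖y - z‖ ^ 2) - (f xs + (1 / (2 * μ)) * ‖xs - z‖ ^ 2) := by
    filter_upwards [Ioo_mem_nhdsGT_of_mem (Set.left_mem_Ico.mpr one_pos)] with t ht
    exact key t ht
  have := le_of_tendsto hlim hev
  linarith

private lemma prox_lip (f : E → ℝ) (ρ μ : ℝ) (hμ : 0 < μ) (hμρ : μ * ρ < 1)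
    (xstar : E → E)
    (hconv : ConvexOn ℝ Set.univ (fun x => f x + (ρ / 2) * ‖x‖ ^ 2))
    (hmin : ∀ z x, f (xstar z) + (1 / (2 * μ)) * ‖xstar z - z‖ ^ 2 ≤
        f x + (1 / (2 * μ)) * ‖x - z‖ ^ 2)
    (z z' : E) :
    ‖xstar z - xstar z'‖ ≤ (1 - μ * ρ)⁻¹ * ‖z - z'‖ := by
  have hσ : 0 < 1 / μ - ρ := by
    rw [sub_pos, lt_div_iff₀ hμ]; linarith [hμρ]
  have h1 := strong_min f ρ μ hμ hconv z (xstar z) (hmin z) (xstar z')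
  have h2 := strong_min f ρ μ hμ hconv z' (xstar z') (hmin z') (xstar z)
  set w := xstar z - xstar z' with hw
  have hns : ‖xstar z' - xstar z‖ = ‖w‖ := norm_sub_rev _ _
  rw [hns] at h1
  have hkey : (1 / (2 * μ)) * ‖xstar z' - z‖ ^ 2 + (1 / (2 * μ)) * ‖xstar z - z'‖ ^ 2
      - (1 / (2 * μ)) * ‖xstar z - z‖ ^ 2 - (1 / (2 * μ)) * ‖xstar z' - z'‖ ^ 2
      = (1 / μ) * ⟪w, z - z'⟫ := by
    have h : ∀ v : E, ‖v‖ ^ 2 = ⟪v, v⟫ := fun v => (real_inner_self_eq_norm_sq v).symm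
    simp only [h, hw, inner_sub_left, inner_sub_right]
    rw [show (1:ℝ)/(2*μ) = (1/μ)/2 from by ring]
    rw [real_inner_comm (xstar z') z, real_inner_comm (xstar z) z',
      real_inner_comm (xstar z) z, real_inner_comm (xstar z') z']
    ring
  have hsum : (1 / μ - ρ) * ‖w‖ ^ 2 ≤ (1 / μ) * ⟪w, z - z'⟫ := by
    rw [← hkey]; linarith [h1, h2]
  have hCS : ⟪w, z - z'⟫ ≤ ‖w‖ * ‖z - z'‖ := real_inner_le_norm w _
  have hb : (1 / μ - ρ) * ‖w‖ ^ 2 ≤ (1 / μ) * (‖w‖ * ‖z - z'‖) := by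
    refine hsum.trans ?_
    have : 0 ≤ (1:ℝ)/μ := by positivity
    exact mul_le_mul_of_nonneg_left hCS this
  have hpos : (0:ℝ) < 1 - μ * ρ := by linarith
  rcases eq_or_lt_of_le (norm_nonneg w) with hw0 | hw0
  · rw [← hw0]; positivity
  · rw [show (1 - μ*ρ)⁻¹ * ‖z - z'‖ = ‖z - z'‖ / (1 - μ*ρ) from by ring, le_div_iff₀ hpos]
    have h5 : (1 / μ - ρ) * ‖w‖ ≤ (1 / μ) * ‖z - z'‖ := by
      have := mul_le_mul_of_nonneg_right hb (le_of_lt (inv_pos.mpr hw0))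
      nlinarith [hw0]
    have h6 := mul_le_mul_of_nonneg_left h5 hμ.le
    have h7 : μ * ((1 / μ - ρ) * ‖w‖) = (1 - μ * ρ) * ‖w‖ := by
      field_simp
    have h8 : μ * (1 / μ * ‖z - z'‖) = ‖z - z'‖ := by field_simp
    rw [h7, h8] at h6
    linarith

private lemma env_upper (f : E → ℝ) (μ : ℝ)
    (xstar : E → E)
    (hmin : ∀ z x, f (xstar z) + (1 / (2 * μ)) * ‖xstar z - z‖ ^ 2 ≤
        f x + (1 / (2 * μ)) * ‖x - z‖ ^ 2)
    (z z' : E) :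
    f (xstar z') + (1 / (2 * μ)) * ‖xstar z' - z'‖ ^ 2 ≤
      (f (xstar z) + (1 / (2 * μ)) * ‖xstar z - z‖ ^ 2)
        + (1 / μ) * ⟪z - xstar z, z' - z⟫ + (1 / (2 * μ)) * ‖z' - z‖ ^ 2 := by
  have hm := hmin z' (xstar z)
  have hexp : ‖xstar z - z'‖ ^ 2 =
      ‖xstar z - z‖ ^ 2 + 2 * ⟪z - xstar z, z' - z⟫ + ‖z' - z‖ ^ 2 := by
    have hsplit : xstar z - z' = (xstar z - z) + (z - z') := by abel
    rw [hsplit, norm_add_sq_real]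
    have h2 : ⟪xstar z - z, z - z'⟫ = ⟪z - xstar z, z' - z⟫ := by
      rw [← inner_neg_neg, neg_sub, neg_sub]
    rw [h2, norm_sub_rev z z']
  rw [hexp] at hm
  rw [show (1:ℝ)/(2*μ) = (1/μ)/2 from by ring] at hm ⊢
  linarith

private lemma hasGradientAt_of_sq_bound [CompleteSpace E] (φ : E → ℝ) (g : E) (z : E) (K : ℝ)
    (h : ∀ z', |φ z' - φ z - ⟪g, z' - z⟫| ≤ K * ‖z' - z‖ ^ 2) :
    HasGradientAt φ g z := by
  rw [hasGradientAt_iff_isLittleO]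
  have hb : (fun z' => φ z' - φ z - ⟪g, z' - z⟫) =O[nhds z] fun z' => ‖z' - z‖ ^ 2 := by
    refine Asymptotics.IsBigO.of_bound (max K 0) ?_
    filter_upwards with z'
    rw [Real.norm_eq_abs, Real.norm_eq_abs, abs_of_nonneg (by positivity : (0:ℝ) ≤ ‖z' - z‖ ^ 2)]
    refine (h z').trans ?_
    have : (0:ℝ) ≤ ‖z' - z‖ ^ 2 := by positivity
    exact mul_le_mul_of_nonneg_right (le_max_left _ _) this
  refine hb.trans_isLittleO ?_
  rw [Asymptotics.isLittleO_iff]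
  intro c hc
  filter_upwards [Metric.ball_mem_nhds z hc] with z' hz'
  rw [mem_ball_iff_norm] at hz'
  rw [Real.norm_eq_abs, abs_of_nonneg (by positivity : (0:ℝ) ≤ ‖z' - z‖ ^ 2), sq]
  exact mul_le_mul_of_nonneg_right hz'.le (norm_nonneg _)

private lemma env_grad [CompleteSpace E] (f : E → ℝ) (ρ μ : ℝ) (hμ : 0 < μ)
    (hμρ : μ * ρ < 1) (xstar : E → E)
    (hconv : ConvexOn ℝ Set.univ (fun x => f x + (ρ / 2) * ‖x‖ ^ 2))
    (hmin : ∀ z x, f (xstar z) + (1 / (2 * μ)) * ‖xstar z - z‖ ^ 2 ≤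
        f x + (1 / (2 * μ)) * ‖x - z‖ ^ 2)
    (z : E) :
    HasGradientAt (fun z => f (xstar z) + (1 / (2 * μ)) * ‖xstar z - z‖ ^ 2)
      ((1 / μ) • (z - xstar z)) z := by
  have hpos : (0:ℝ) < 1 - μ * ρ := by linarith
  set L : ℝ := (1 - μ * ρ)⁻¹ with hL
  have hL0 : 0 < L := inv_pos.mpr hpos
  apply hasGradientAt_of_sq_bound _ _ _ ((1 / μ) / 2 + (1 / μ) * (1 + L))
  intro z'
  rw [real_inner_smul_left]
  have hup := env_upper f μ xstar hmin z z'
  have hlo := env_upper f μ xstar hmin z' z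
  have hneg : ⟪z' - xstar z', z - z'⟫ = -⟪z' - xstar z', z' - z⟫ := by
    rw [← inner_neg_right, neg_sub]
  rw [hneg, norm_sub_rev z z'] at hlo
  have hdiff : (1 / μ) * ⟪z' - xstar z', z' - z⟫ - (1 / μ) * ⟪z - xstar z, z' - z⟫
      = (1 / μ) * ⟪(z' - z) - (xstar z' - xstar z), z' - z⟫ := by
    rw [← mul_sub, ← inner_sub_left]
    congr 2
    abel
  have habs : |⟪(z' - z) - (xstar z' - xstar z), z' - z⟫| ≤ (1 + L) * ‖z' - z‖ ^ 2 := by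
    calc |⟪(z' - z) - (xstar z' - xstar z), z' - z⟫|
        ≤ ‖(z' - z) - (xstar z' - xstar z)‖ * ‖z' - z‖ := abs_real_inner_le_norm _ _
      _ ≤ (‖z' - z‖ + ‖xstar z' - xstar z‖) * ‖z' - z‖ := by
          gcongr
          exact norm_sub_le _ _
      _ ≤ (‖z' - z‖ + L * ‖z' - z‖) * ‖z' - z‖ := by
          gcongr
          exact prox_lip f ρ μ hμ hμρ xstar hconv hmin z' z
      _ = (1 + L) * ‖z' - z‖ ^ 2 := by ring
  obtain ⟨habs1, habs2⟩ := abs_le.mp habs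
  have hμ0 : (0:ℝ) ≤ 1 / μ := by positivity
  have hm1 := mul_le_mul_of_nonneg_left habs1 hμ0
  have hprod : (0:ℝ) ≤ (1 / μ) * ((1 + L) * ‖z' - z‖ ^ 2) := by positivity
  rw [show (1:ℝ)/(2*μ) = (1/μ)/2 from by ring] at hup hlo ⊢
  rw [abs_le]
  constructor
  · nlinarith [hlo, hdiff, hm1]
  · nlinarith [hup, hprod]

end Helpers

/-- Gradient and smoothness of the difference of two Moreau envelopes. -/
theorem dc_envelope_gradient {d : ℕ}
    (f₁ f₂ : EuclideanSpace ℝ (Fin d) → ℝ)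
    (ρ : ℝ) (hρ : 0 < ρ)
    (hwc₁ : ConvexOn ℝ Set.univ (fun x => f₁ x + (ρ / 2) * ‖x‖ ^ 2))
    (hwc₂ : ConvexOn ℝ Set.univ (fun x => f₂ x + (ρ / 2) * ‖x‖ ^ 2))
    (μ : ℝ) (hμ : 0 < μ) (hμρ : μ < 1 / ρ)
    (x₁star x₂star : EuclideanSpace ℝ (Fin d) → EuclideanSpace ℝ (Fin d))
    (hx₁ : ∀ z x, f₁ (x₁star z) + (1 / (2 * μ)) * ‖x₁star z - z‖ ^ 2 ≤
        f₁ x + (1 / (2 * μ)) * ‖x - z‖ ^ 2)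
    (hx₂ : ∀ z x, f₂ (x₂star z) + (1 / (2 * μ)) * ‖x₂star z - z‖ ^ 2 ≤
        f₂ x + (1 / (2 * μ)) * ‖x - z‖ ^ 2) :
    (∀ z, HasGradientAt
        (fun z => (f₂ (x₂star z) + (1 / (2 * μ)) * ‖x₂star z - z‖ ^ 2) -
          (f₁ (x₁star z) + (1 / (2 * μ)) * ‖x₁star z - z‖ ^ 2))
        ((1 / μ) • (x₁star z - x₂star z)) z) ∧
      (∀ z z', ‖(1 / μ) • (x₁star z - x₂star z) - (1 / μ) • (x₁star z' - x₂star z')‖ ≤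
        (2 / (μ - μ ^ 2 * ρ)) * ‖z - z'‖) := by
  have hμρ' : μ * ρ < 1 := (lt_div_iff₀ hρ).mp hμρ
  have hpos : (0:ℝ) < 1 - μ * ρ := by linarith
  constructor
  · intro z
    have h1 := env_grad f₁ ρ μ hμ hμρ' x₁star hwc₁ hx₁ z
    have h2 := env_grad f₂ ρ μ hμ hμρ' x₂star hwc₂ hx₂ z
    have hveq : (1 / μ) • (x₁star z - x₂star z) =
        (1 / μ) • (z - x₂star z) - (1 / μ) • (z - x₁star z) := by module
    rw [hasGradientAt_iff_hasFDerivAt, hveq, map_sub]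
    exact h2.hasFDerivAt.sub h1.hasFDerivAt
  · intro z z'
    have l1 := prox_lip f₁ ρ μ hμ hμρ' x₁star hwc₁ hx₁ z z'
    have l2 := prox_lip f₂ ρ μ hμ hμρ' x₂star hwc₂ hx₂ z z'
    have heq : (1 / μ) • (x₁star z - x₂star z) - (1 / μ) • (x₁star z' - x₂star z') =
        (1 / μ) • ((x₁star z - x₁star z') - (x₂star z - x₂star z')) := by module
    rw [heq, norm_smul]
    have habs : ‖(1:ℝ) / μ‖ = 1 / μ := by
      rw [Real.norm_eq_abs, abs_of_pos (by positivity)]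
    rw [habs]
    have hn : ‖(x₁star z - x₁star z') - (x₂star z - x₂star z')‖ ≤
        (1 - μ * ρ)⁻¹ * ‖z - z'‖ + (1 - μ * ρ)⁻¹ * ‖z - z'‖ :=
      (norm_sub_le _ _).trans (add_le_add l1 l2)
    have hconst : (2:ℝ) / (μ - μ ^ 2 * ρ) =
        (1 / μ) * ((1 - μ * ρ)⁻¹ + (1 - μ * ρ)⁻¹) := by
      have hd : (0:ℝ) < μ - μ ^ 2 * ρ := by nlinarith [hμ, hpos]
      field_simp
      ring
    rw [hconst]
    have h1μ : (0:ℝ) ≤ 1 / μ := by positivity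
    calc (1 / μ) * ‖(x₁star z - x₁star z') - (x₂star z - x₂star z')‖
        ≤ (1 / μ) * ((1 - μ * ρ)⁻¹ * ‖z - z'‖ + (1 - μ * ρ)⁻¹ * ‖z - z'‖) :=
          mul_le_mul_of_nonneg_left hn h1μ
      _ = (1 / μ) * ((1 - μ * ρ)⁻¹ + (1 - μ * ρ)⁻¹) * ‖z - z'‖ := by ring
end
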